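/- (Norm lower bound from the fraction of memorized majority points.) Suppose the training noise vectors x_noise^(1), …, x_noise^(n) ∈ ℝ^N satisfy ‖x_noise^(i)‖₂² ≥ (1−c₁)·σ_noise² for all i and |⟨x_noise^(i), x_noise^(j)⟩| ≤ σ_noise²/n⁶ for all i ≠ j, with c₁ ∈ (0,1). Let w = [w_core, w_spu, w_noise] with w_noise = Σ_i s_i·x_noise^(i), and suppose s_i² ≤ 10·n/σ_noise⁴ for all i. Then for every γ > 0, ‖w‖₂² ≥ (γ⁴·(1−c₁)/σ_noise²)·δ_maj(w, γ²)·n_maj − 10/(σ_noise²·n³), where δ_maj(w, γ²) is the fraction of the n_maj majority training points with |s_i| > γ²/σ_noise². -/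

import Mathlib

open Finset
open scoped Classical

/-- **Norm lower bound from the fraction of memorized majority points.** Given training
noise vectors `x_noise⁽ⁱ⁾ ∈ ℝ^N` with `‖x_noise⁽ⁱ⁾‖₂² ≥ (1−c₁)·σ_noise²` and
`|⟨x_noise⁽ⁱ⁾, x_noise⁽ʲ⁾⟩| ≤ σ_noise²/n⁶` for `i ≠ j`, and a model
`w = [w_core, w_spu, Σ_i s_i·x_noise⁽ⁱ⁾]` with `s_i² ≤ 10·n/σ_noise⁴`, we have for `γ > 0`
`‖w‖₂² ≥ (γ⁴·(1−c₁)/σ_noise²)·δ_maj(w,γ²)·n_maj − 10/(σ_noise²·n³)`, where `δ_maj(w,γ²)` is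
the fraction of the `n_maj` majority points with `|s_i| > γ²/σ_noise²`. -/
theorem norm_lower_bound_from_memorized_fraction
    (N nMaj nMin : ℕ) (n : ℕ) (hn : n = nMaj + nMin)
    (Maj : Finset (Fin n)) (hMajCard : Maj.card = nMaj)
    (xnoise : Fin n → Fin N → ℝ)
    (σn2 : ℝ) (hσn2 : 0 < σn2) (c1 : ℝ) (hc1 : 0 < c1) (hc1' : c1 < 1)
    (hnorm : ∀ i, (1 - c1) * σn2 ≤ ∑ k, (xnoise i k) ^ 2)
    (hdot : ∀ i j, i ≠ j → |∑ k, xnoise i k * xnoise j k| ≤ σn2 / (n : ℝ) ^ 6)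
    (wcore wspu : ℝ) (s : Fin n → ℝ)
    (hs : ∀ i, (s i) ^ 2 ≤ 10 * (n : ℝ) / σn2 ^ 2)
    (γ : ℝ) (hγ : 0 < γ) :
    (γ ^ 4 * (1 - c1) / σn2) *
        (((Maj.filter fun i => γ ^ 2 / σn2 < |s i|).card : ℝ) / (nMaj : ℝ)) * (nMaj : ℝ) -
        10 / (σn2 * (n : ℝ) ^ 3) ≤
      wcore ^ 2 + wspu ^ 2 + ∑ k, (∑ i, s i * xnoise i k) ^ 2 := by
  classical
  set M := Maj.filter fun i => γ ^ 2 / σn2 < |s i| with hMdef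
  set C := γ ^ 4 * (1 - c1) / σn2 with hCdef
  have hC : 0 ≤ C := by
    apply div_nonneg _ hσn2.le
    have : 0 ≤ 1 - c1 := by linarith
    positivity
  rcases Nat.eq_zero_or_pos n with hn0 | hnpos
  · subst hn0
    have hMaj0 : nMaj = 0 := by omega
    have hM0 : M = ∅ := Finset.eq_empty_of_isEmpty M
    simp [hM0, hMaj0]
    positivity
  have hncast : (0:ℝ) < (n:ℝ) := by exact_mod_cast hnpos
  have hnne : (n:ℝ) ≠ 0 := ne_of_gt hncast
  -- key identity
  have key : ∑ k, (∑ i, s i * xnoise i k) ^ 2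
      = ∑ i, ∑ j, s i * s j * (∑ k, xnoise i k * xnoise j k) := by
    have h1 : ∀ k, (∑ i, s i * xnoise i k) ^ 2
        = ∑ i, ∑ j, s i * s j * (xnoise i k * xnoise j k) := by
      intro k
      rw [sq, Finset.sum_mul_sum]
      apply Finset.sum_congr rfl; intro i _
      apply Finset.sum_congr rfl; intro j _
      ring
    simp only [h1]
    rw [Finset.sum_comm]
    apply Finset.sum_congr rfl; intro i _
    rw [Finset.sum_comm]
    apply Finset.sum_congr rfl; intro j _
    rw [Finset.mul_sum]
  -- split diagonal
  have split : ∑ i, ∑ j, s i * s j * (∑ k, xnoise i k * xnoise j k)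
      = (∑ i, s i ^ 2 * ∑ k, (xnoise i k) ^ 2)
        + ∑ i, ∑ j ∈ Finset.univ.erase i, s i * s j * (∑ k, xnoise i k * xnoise j k) := by
    rw [← Finset.sum_add_distrib]
    apply Finset.sum_congr rfl; intro i _
    rw [← Finset.add_sum_erase _ _ (Finset.mem_univ i)]
    congr 1
    simp [sq]
  -- diagonal lower bound
  have hdiag : C * (M.card : ℝ) ≤ ∑ i, s i ^ 2 * ∑ k, (xnoise i k) ^ 2 := by
    have h1 : ∀ i ∈ M, C ≤ s i ^ 2 * ∑ k, (xnoise i k) ^ 2 := by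
      intro i hi
      have hi' : γ ^ 2 / σn2 < |s i| := (Finset.mem_filter.mp hi).2
      have hnn : (0:ℝ) ≤ γ ^ 2 / σn2 := by positivity
      have hsq : (γ ^ 2 / σn2) ^ 2 ≤ s i ^ 2 := by
        have := pow_le_pow_left₀ hnn hi'.le 2
        simpa [sq_abs] using this
      have hCeq : C = (γ ^ 2 / σn2) ^ 2 * ((1 - c1) * σn2) := by
        rw [hCdef]; field_simp
      rw [hCeq]
      have h1c : (0:ℝ) ≤ (1 - c1) * σn2 := by
        have : 0 ≤ 1 - c1 := by linarith
        positivity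
      exact mul_le_mul hsq (hnorm i) h1c (by positivity)
    calc C * (M.card : ℝ) = ∑ _i ∈ M, C := by
          rw [Finset.sum_const, nsmul_eq_mul]; ring
      _ ≤ ∑ i ∈ M, s i ^ 2 * ∑ k, (xnoise i k) ^ 2 := Finset.sum_le_sum h1
      _ ≤ ∑ i, s i ^ 2 * ∑ k, (xnoise i k) ^ 2 := by
          apply Finset.sum_le_sum_of_subset_of_nonneg (Finset.subset_univ M)
          intro i _ _
          positivity
  -- cross term bound
  set E := ∑ i, ∑ j ∈ Finset.univ.erase i, s i * s j * (∑ k, xnoise i k * xnoise j k) with hEdef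
  have hB : ∀ i j : Fin n, |s i * s j| ≤ 10 * (n:ℝ) / σn2 ^ 2 := by
    intro i j
    have hBnn : (0:ℝ) ≤ 10 * (n:ℝ) / σn2 ^ 2 := by positivity
    have h1 : |s i| ≤ Real.sqrt (10 * (n:ℝ) / σn2 ^ 2) := Real.abs_le_sqrt (hs i)
    have h2 : |s j| ≤ Real.sqrt (10 * (n:ℝ) / σn2 ^ 2) := Real.abs_le_sqrt (hs j)
    calc |s i * s j| = |s i| * |s j| := abs_mul _ _
      _ ≤ Real.sqrt (10 * (n:ℝ) / σn2 ^ 2) * Real.sqrt (10 * (n:ℝ) / σn2 ^ 2) :=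
          mul_le_mul h1 h2 (abs_nonneg _) (Real.sqrt_nonneg _)
      _ = 10 * (n:ℝ) / σn2 ^ 2 := Real.mul_self_sqrt hBnn
  have habs : |E| ≤ 10 / (σn2 * (n:ℝ) ^ 3) := by
    have hterm : ∀ i : Fin n, ∀ j ∈ Finset.univ.erase i,
        |s i * s j * (∑ k, xnoise i k * xnoise j k)|
          ≤ (10 * (n:ℝ) / σn2 ^ 2) * (σn2 / (n:ℝ) ^ 6) := by
      intro i j hj
      have hij : i ≠ j := fun h => (Finset.mem_erase.mp hj).1 h.symm
      rw [abs_mul]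
      exact mul_le_mul (hB i j) (hdot i j hij) (abs_nonneg _) (by positivity)
    calc |E| ≤ ∑ i, |∑ j ∈ Finset.univ.erase i, s i * s j * (∑ k, xnoise i k * xnoise j k)| :=
          Finset.abs_sum_le_sum_abs _ _
      _ ≤ ∑ i : Fin n, ∑ j ∈ Finset.univ.erase i,
            |s i * s j * (∑ k, xnoise i k * xnoise j k)| := by
          apply Finset.sum_le_sum
          intro i _
          exact Finset.abs_sum_le_sum_abs _ _
      _ ≤ ∑ i : Fin n, ∑ _j ∈ (Finset.univ : Finset (Fin n)).erase i,
            ((10 * (n:ℝ) / σn2 ^ 2) * (σn2 / (n:ℝ) ^ 6)) := by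
          apply Finset.sum_le_sum
          intro i _
          exact Finset.sum_le_sum (hterm i)
      _ ≤ ∑ _i : Fin n, (n:ℝ) * ((10 * (n:ℝ) / σn2 ^ 2) * (σn2 / (n:ℝ) ^ 6)) := by
          apply Finset.sum_le_sum
          intro i _
          rw [Finset.sum_const, nsmul_eq_mul]
          apply mul_le_mul_of_nonneg_right _ (by positivity)
          have : ((Finset.univ : Finset (Fin n)).erase i).card ≤ n := by
            calc ((Finset.univ : Finset (Fin n)).erase i).card
                ≤ (Finset.univ : Finset (Fin n)).card := Finset.card_le_card (Finset.erase_subset _ _)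
              _ = n := by simp
          exact_mod_cast this
      _ = 10 / (σn2 * (n:ℝ) ^ 3) := by
          rw [Finset.sum_const, nsmul_eq_mul]
          simp only [Finset.card_univ, Fintype.card_fin]
          field_simp
  have hE' : -(10 / (σn2 * (n:ℝ) ^ 3)) ≤ E := neg_le_of_abs_le habs
  -- first term
  have h2 : C * ((M.card : ℝ) / (nMaj : ℝ)) * (nMaj : ℝ) ≤ C * (M.card : ℝ) := by
    rcases eq_or_ne (nMaj : ℝ) 0 with h0 | h0
    · rw [h0, mul_zero]
      positivity
    · rw [mul_assoc, div_mul_cancel₀ _ h0]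
  have hw : 0 ≤ wcore ^ 2 + wspu ^ 2 := by positivity
  have hQ : C * (M.card : ℝ) - 10 / (σn2 * (n:ℝ) ^ 3) ≤ ∑ k, (∑ i, s i * xnoise i k) ^ 2 := by
    rw [key, split]

    linarith
  linarith
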